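/- Every finite cop-win graph is constructible: if the cop has a winning strategy on a finite reflexive graph G, then G admits a dominating order. -/

import Mathlib

structure RefGraph (V : Type*) where
  Adj : V → V → Prop
  symm : ∀ u v, Adj u v → Adj v u
  refl : ∀ v, Adj v v

/-- The sequence of cop positions when the cop starts at `c0`, plays the
(positional) strategy `S`, and the robber's positions are given by `rb`
(`rb 0` is the robber's starting vertex, chosen after seeing `c0`;
the cop's `(n+1)`-st position responds to the robber's position `rb n`). -/
def copSeq {V : Type*} (S : V → V → V) (c0 : V) (rb : ℕ → V) : ℕ → V
  | 0 => c0
  | n + 1 => S (copSeq S c0 rb n) (rb n)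

/-- A legal robber play: consecutive positions are adjacent (staying put is
allowed since graphs are reflexive). -/
def LegalPlay {V : Type*} (G : RefGraph V) (rb : ℕ → V) : Prop :=
  ∀ n, G.Adj (rb n) (rb (n + 1))

/-- The cop playing `S` from `c0` catches the robber play `rb`: at some point
cop and robber occupy the same vertex. -/
def Catches {V : Type*} (S : V → V → V) (c0 : V) (rb : ℕ → V) : Prop :=
  ∃ n, copSeq S c0 rb n = rb n ∨ copSeq S c0 rb (n + 1) = rb n

/-- `(c0, S)` is a winning strategy for the cop on `G`: all moves are legal and
every legal robber play is caught after finitely many rounds. -/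
def WinningStrat {V : Type*} (G : RefGraph V) (c0 : V) (S : V → V → V) : Prop :=
  (∀ c r, G.Adj c (S c r)) ∧ ∀ rb : ℕ → V, LegalPlay G rb → Catches S c0 rb

/-- `G` is cop-win: the cop has a winning strategy. -/
def CopWin {V : Type*} (G : RefGraph V) : Prop :=
  ∃ (c0 : V) (S : V → V → V), WinningStrat G c0 S

/-- `r` (a strict order relation) is a dominating order for `G`: every vertex `ν`
which is not minimal is dominated in `G_{≤ν}` by some earlier vertex. -/
def IsDomOrder {V : Type*} (G : RefGraph V) (r : V → V → Prop) : Prop :=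
  ∀ ν, (∃ μ, r μ ν) →
    ∃ μ, r μ ν ∧ G.Adj μ ν ∧ ∀ η, (r η ν ∨ η = ν) → G.Adj ν η → G.Adj μ η

/-- `G` is constructible: some well order of the vertex set is a dominating order. -/
def Constructible {V : Type*} (G : RefGraph V) : Prop :=
  ∃ r : V → V → Prop, IsWellOrder V r ∧ IsDomOrder G r

namespace CopWinAux

variable {V : Type*}

/-- `Cc G A n x y`: on the graph induced on `A`, with the robber on `x`, the cop
on `y` and the cop to move, the cop can guarantee a capture within `n` cop moves
(capture = the positions coincide before the cop's move, or the cop moves onto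
the robber's current position). -/
def Cc (G : RefGraph V) (A : Finset V) : ℕ → V → V → Prop
  | 0 => fun x y => x = y
  | n + 1 => fun x y => x = y ∨
      ∃ y' ∈ A, G.Adj y y' ∧ (y' = x ∨ ∀ x' ∈ A, G.Adj x x' → Cc G A n x' y')

theorem Cc_succ_of (G : RefGraph V) (A : Finset V) (n : ℕ) {x y : V} :
    Cc G A n x y → Cc G A (n + 1) x y := by
  induction n generalizing x y with
  | zero => exact fun h => Or.inl h
  | succ n ih =>
    rintro (h | ⟨y', hy'A, hadj, hb⟩)
    · exact Or.inl h
    · exact Or.inr ⟨y', hy'A, hadj, hb.imp id fun hall x' hx' ha => ih (hall x' hx' ha)⟩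

theorem Cc_mono (G : RefGraph V) (A : Finset V) {m n : ℕ} (h : m ≤ n) {x y : V} :
    Cc G A m x y → Cc G A n x y := by
  induction h with
  | refl => exact id
  | step _ ih => exact fun hc => Cc_succ_of G A _ (ih hc)

/-- A corner in the graph induced on `A`: `u` dominated by `w ≠ u`. -/
def IsCornerIn (G : RefGraph V) (A : Finset V) (u w : V) : Prop :=
  u ∈ A ∧ w ∈ A ∧ u ≠ w ∧ ∀ z ∈ A, G.Adj u z → G.Adj w z

/-- If the induced graph on `A` has no corner, a robber not adjacent to the cop
can evade forever. -/
theorem escape (G : RefGraph V) (A : Finset V) (hnc : ¬ ∃ u w, IsCornerIn G A u w) :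
    ∀ n x y, x ∈ A → y ∈ A → ¬ G.Adj x y → ¬ Cc G A n x y := by
  intro n
  induction n with
  | zero =>
    intro x y _ _ hna h
    exact hna (h ▸ G.refl x)
  | succ n ih =>
    rintro x y hx hy hna (h | ⟨y', hy'A, hadj, hb⟩)
    · exact hna (h ▸ G.refl x)
    · rcases hb with rfl | hall
      · exact hna (G.symm _ _ hadj)
      · have hxy' : x ≠ y' := fun h => hna (G.symm _ _ (h ▸ hadj))
        have : ¬ ∀ z ∈ A, G.Adj x z → G.Adj y' z := fun hdom =>
          hnc ⟨x, y', hx, hy'A, hxy', hdom⟩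
        push_neg at this
        obtain ⟨z, hzA, hxz, hnyz⟩ := this
        exact ih z y' hzA hy'A (fun h => hnyz (G.symm _ _ h)) (hall z hzA hxz)

def Inv (G : RefGraph V) (A : Finset V) : Prop :=
  ∃ y0 ∈ A, ∀ x ∈ A, ∃ n, Cc G A n x y0

theorem exists_corner (G : RefGraph V) (A : Finset V) (hInv : Inv G A)
    (hcard : 2 ≤ A.card) : ∃ u w, IsCornerIn G A u w := by
  by_contra hnc
  obtain ⟨y0, hy0, hfull⟩ := hInv
  have hadj : ∀ x ∈ A, G.Adj x y0 := by
    intro x hx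
    by_contra hna
    obtain ⟨n, hC⟩ := hfull x hx
    exact escape G A hnc n x y0 hx hy0 hna hC
  obtain ⟨x, hx, hne⟩ := Finset.exists_mem_ne (show 1 < A.card by omega) y0
  exact hnc ⟨x, y0, hx, hy0, hne, fun z hz _ => G.symm _ _ (hadj z hz)⟩

section Retract

variable (G : RefGraph V) (A : Finset V) {u w : V}

theorem retract [DecidableEq V] (hu : u ∈ A) (hw : w ∈ A) (hne : u ≠ w)
    (hdom : ∀ z ∈ A, G.Adj u z → G.Adj w z) :
    ∀ n x y, x ∈ A.erase u → y ∈ A → Cc G A n x y →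
      Cc G (A.erase u) n x (if y = u then w else y) := by
  have hfmem : ∀ y ∈ A, (if y = u then w else y) ∈ A.erase u := by
    intro y hy
    by_cases h : y = u
    · simpa [h] using Finset.mem_erase.2 ⟨hne.symm, hw⟩
    · simpa [h] using Finset.mem_erase.2 ⟨h, hy⟩
  have hfadj : ∀ y ∈ A, ∀ y' ∈ A, G.Adj y y' →
      G.Adj (if y = u then w else y) (if y' = u then w else y') := by
    intro y hy y' hy' hadj
    by_cases h : y = u <;> by_cases h' : y' = u <;> simp [h, h']
    · exact G.refl w
    · exact hdom y' hy' (h ▸ hadj)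
    · exact G.symm _ _ (hdom y hy (G.symm _ _ (h' ▸ hadj)))
    · exact hadj
  intro n
  induction n with
  | zero =>
    intro x y hx hy (h : x = y)
    have hxu : x ≠ u := (Finset.mem_erase.1 hx).1
    simp only [Cc]
    rw [← h, if_neg hxu]
  | succ n ih =>
    rintro x y hx hy (h | ⟨y', hy'A, hadj, hb⟩)
    · have hxu : x ≠ u := (Finset.mem_erase.1 hx).1
      exact Or.inl (by rw [← h, if_neg hxu])
    · rcases hb with rfl | hall
      · refine Or.inr ⟨y', hx, ?_, Or.inl rfl⟩
        have := hfadj y hy y' hy'A hadj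
        rwa [if_neg (Finset.mem_erase.1 hx).1] at this
      · refine Or.inr ⟨if y' = u then w else y', hfmem y' hy'A, hfadj y hy y' hy'A hadj,
          Or.inr fun x' hx' ha => ?_⟩
        exact ih x' y' hx' hy'A (hall x' (Finset.mem_of_mem_erase hx') ha)

theorem inv_erase [DecidableEq V] (hu : u ∈ A) (hw : w ∈ A) (hne : u ≠ w)
    (hdom : ∀ z ∈ A, G.Adj u z → G.Adj w z) (hInv : Inv G A) : Inv G (A.erase u) := by
  obtain ⟨y0, hy0, hfull⟩ := hInv
  refine ⟨if y0 = u then w else y0, ?_, fun x hx => ?_⟩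
  · by_cases h : y0 = u
    · simpa [h] using Finset.mem_erase.2 ⟨hne.symm, hw⟩
    · simpa [h] using Finset.mem_erase.2 ⟨h, hy0⟩
  · obtain ⟨n, hC⟩ := hfull x (Finset.mem_of_mem_erase hx)
    exact ⟨n, retract G A hu hw hne hdom n x y0 hx hy0 hC⟩

end Retract

/-- The domination property along a list: each vertex is dominated, among the
vertices from itself onwards, by some later vertex (unless it is the last). -/
def QList (G : RefGraph V) : List V → Prop
  | [] => True
  | u :: M => QList G M ∧
      (M ≠ [] → ∃ w ∈ M, G.Adj w u ∧ ∀ η ∈ u :: M, G.Adj u η → G.Adj w η)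

theorem QList_drop (G : RefGraph V) : ∀ (M : List V), QList G M →
    ∀ k, QList G (M.drop k) := by
  intro M
  induction M with
  | nil => intro _ k; rw [List.drop_nil]; trivial
  | cons u M ih =>
    intro hQ k
    cases k with
    | zero => exact hQ
    | succ k => exact ih hQ.1 k

theorem build (G : RefGraph V) [DecidableEq V] :
    ∀ (n : ℕ) (A : Finset V), A.card ≤ n → Inv G A →
      ∃ M : List V, M.Nodup ∧ M.toFinset = A ∧ QList G M := by
  intro n
  induction n with
  | zero =>
    intro A hcard hInv
    obtain ⟨y0, hy0, -⟩ := hInv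
    exact absurd (Finset.card_pos.2 ⟨y0, hy0⟩) (by omega)
  | succ n ih =>
    intro A hcard hInv
    by_cases h1 : A.card ≤ 1
    · obtain ⟨y0, hy0, -⟩ := hInv
      have : A.card = 1 := le_antisymm h1 (Finset.card_pos.2 ⟨y0, hy0⟩)
      obtain ⟨a, rfl⟩ := Finset.card_eq_one.1 this
      exact ⟨[a], by simp, by simp, ⟨trivial, fun h => absurd rfl h⟩⟩
    · have h2 : 2 ≤ A.card := by omega
      obtain ⟨u, w, hu, hw, hne, hdom⟩ := exists_corner G A hInv h2
      have hInv' : Inv G (A.erase u) := inv_erase G A hu hw hne hdom hInv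
      have hcard' : (A.erase u).card ≤ n := by
        rw [Finset.card_erase_of_mem hu]; omega
      obtain ⟨M, hnd, htf, hQ⟩ := ih (A.erase u) hcard' hInv'
      refine ⟨u :: M, ?_, ?_, ?_⟩
      · refine List.nodup_cons.2 ⟨fun hmem => ?_, hnd⟩
        have : u ∈ A.erase u := htf ▸ List.mem_toFinset.2 hmem
        exact (Finset.mem_erase.1 this).1 rfl
      · rw [List.toFinset_cons, htf, Finset.insert_erase hu]
      · refine ⟨hQ, fun _ => ⟨w, ?_, ?_, ?_⟩⟩
        · exact List.mem_toFinset.1 (htf ▸ Finset.mem_erase.2 ⟨hne.symm, hw⟩)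
        · exact hdom u hu (G.refl u)
        · intro η hη hadj
          refine hdom η ?_ hadj
          rcases List.mem_cons.1 hη with rfl | hη
          · exact hu
          · exact Finset.mem_of_mem_erase (htf ▸ List.mem_toFinset.2 hη)

/-- Cop-win gives that every robber position is caught from `c0` in the
`Cc`-calculus on the whole vertex set. -/
theorem copwin_full (G : RefGraph V) [Fintype V] {c0 : V} {S : V → V → V}
    (hleg : ∀ c r, G.Adj c (S c r))
    (hwin : ∀ rb : ℕ → V, LegalPlay G rb → Catches S c0 rb) :
    ∀ x, ∃ n, Cc G Finset.univ n x c0 := by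
  classical
  by_contra hbad
  push_neg at hbad
  obtain ⟨x0, hx0⟩ := hbad
  -- key step: from an uncatchable position, the robber can move to stay uncatchable
  have key : ∀ x y, (∀ n, ¬ Cc G Finset.univ n x y) →
      S y x ≠ x ∧ ∃ x', G.Adj x x' ∧ ∀ n, ¬ Cc G Finset.univ n x' (S y x) := by
    intro x y hP
    have hne : S y x ≠ x := by
      intro h
      exact hP 1 (Or.inr ⟨S y x, Finset.mem_univ _, hleg y x, Or.inl h⟩)
    refine ⟨hne, ?_⟩
    by_contra hno
    push_neg at hno
    have hx' : ∀ x', ∃ m, G.Adj x x' → Cc G Finset.univ m x' (S y x) := by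
      intro x'
      by_cases h : G.Adj x x'
      · obtain ⟨m, hm⟩ := hno x' h
        exact ⟨m, fun _ => hm⟩
      · exact ⟨0, fun h' => absurd h' h⟩
    choose ng hng using hx'
    have hN : ∀ x', G.Adj x x' → Cc G Finset.univ (Finset.univ.sup ng) x' (S y x) :=
      fun x' h => Cc_mono G _ (Finset.le_sup (Finset.mem_univ x')) (hng x' h)
    exact hP (Finset.univ.sup ng + 1)
      (Or.inr ⟨S y x, Finset.mem_univ _, hleg y x,
        Or.inr fun x' _ h => hN x' h⟩)
  -- build the evading robber play
  let step : V × V → V × V := fun p =>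
    (if h : ∀ n, ¬ Cc G Finset.univ n p.1 p.2 then (key p.1 p.2 h).2.choose else p.1,
     S p.2 p.1)
  let p : ℕ → V × V := fun n => step^[n] (x0, c0)
  have hP : ∀ n, ∀ m, ¬ Cc G Finset.univ m (p n).1 (p n).2 := by
    intro n
    induction n with
    | zero => exact hx0
    | succ n ihn =>
      have hstep : p (n + 1) = step (p n) := Function.iterate_succ_apply' step n _
      rw [hstep]
      show ∀ m, ¬ Cc G Finset.univ m
        (if h : ∀ k, ¬ Cc G Finset.univ k (p n).1 (p n).2 then _ else (p n).1)
        (S (p n).2 (p n).1)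
      rw [dif_pos ihn]
      exact (key (p n).1 (p n).2 ihn).2.choose_spec.2
  have hstep1 : ∀ n, (p (n + 1)).1 = (key (p n).1 (p n).2 (hP n)).2.choose := by
    intro n
    have hstep : p (n + 1) = step (p n) := Function.iterate_succ_apply' step n _
    rw [hstep]
    show (if h : ∀ k, ¬ Cc G Finset.univ k (p n).1 (p n).2 then _ else (p n).1) = _
    rw [dif_pos (hP n)]
  have hstep2 : ∀ n, (p (n + 1)).2 = S (p n).2 (p n).1 := by
    intro n
    have hstep : p (n + 1) = step (p n) := Function.iterate_succ_apply' step n _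
    rw [hstep]
  let rb : ℕ → V := fun n => (p n).1
  have hlegal : LegalPlay G rb := by
    intro n
    show G.Adj (p n).1 (p (n + 1)).1
    rw [hstep1 n]
    exact (key (p n).1 (p n).2 (hP n)).2.choose_spec.1
  have hcop : ∀ n, copSeq S c0 rb n = (p n).2 := by
    intro n
    induction n with
    | zero => rfl
    | succ n ihn => rw [copSeq, ihn, hstep2 n]
  obtain ⟨n, hcatch | hcatch⟩ := hwin rb hlegal
  · rw [hcop n] at hcatch
    exact hP n 0 ((hcatch.symm : (p n).1 = (p n).2))
  · rw [hcop (n + 1), hstep2 n] at hcatch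
    exact (key (p n).1 (p n).2 (hP n)).1 hcatch

theorem mem_drop_of_indexOf_lt [DecidableEq V] {M : List V} (hnd : M.Nodup)
    {a b : V} (hb : b ∈ M) (hlt : M.idxOf a < M.idxOf b) :
    b ∈ M.drop (M.idxOf a + 1) := by
  have hjb : M.idxOf b < M.length := List.idxOf_lt_length_iff.2 hb
  have hlen : M.idxOf b - (M.idxOf a + 1) < (M.drop (M.idxOf a + 1)).length := by
    rw [List.length_drop]; omega
  have : (M.drop (M.idxOf a + 1))[M.idxOf b - (M.idxOf a + 1)] = b := by
    rw [List.getElem_drop]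
    have : M.idxOf a + 1 + (M.idxOf b - (M.idxOf a + 1)) = M.idxOf b := by omega
    simp only [this]
    exact List.getElem_idxOf hjb
  exact this ▸ List.getElem_mem hlen

theorem indexOf_lt_of_mem_drop [DecidableEq V] {M : List V} (hnd : M.Nodup)
    {k : ℕ} {b : V} (hb : b ∈ M.drop k) : k ≤ M.idxOf b := by
  obtain ⟨j, hj, hbj⟩ := List.getElem_of_mem hb
  rw [List.getElem_drop] at hbj
  have hjk : k + j < M.length := by
    have := hj; rw [List.length_drop] at this; omega
  rw [← hbj, hnd.idxOf_getElem (k + j) hjk]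
  omega

end CopWinAux

open CopWinAux in
/-- every finite cop-win graph is constructible. -/
theorem constructible_of_copWin {V : Type*} [Fintype V] (G : RefGraph V)
    (h : CopWin G) : Constructible G := by
  classical
  obtain ⟨c0, S, hleg, hwin⟩ := h
  have hfull : ∀ x, ∃ n, Cc G Finset.univ n x c0 := copwin_full G hleg hwin
  have hInv : Inv G (Finset.univ : Finset V) :=
    ⟨c0, Finset.mem_univ c0, fun x _ => hfull x⟩
  obtain ⟨M, hnd, htf, hQ⟩ :=
    build G (Finset.univ : Finset V).card (Finset.univ : Finset V) le_rfl hInv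
  have hmem : ∀ v : V, v ∈ M := fun v => List.mem_toFinset.1 (htf ▸ Finset.mem_univ v)
  refine ⟨fun μ ν => M.idxOf ν < M.idxOf μ, ?_, ?_⟩
  · have htrans : IsTrans V (fun μ ν => M.idxOf ν < M.idxOf μ) :=
      ⟨fun _ _ _ h1 h2 => lt_trans h2 h1⟩
    have hirr : IsIrrefl V (fun μ ν => M.idxOf ν < M.idxOf μ) :=
      ⟨fun _ h => lt_irrefl _ h⟩
    refine { trichotomous := fun a b => ?_,
             wf := @Finite.wellFounded_of_trans_of_irrefl V _ _ htrans hirr }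
    rcases lt_trichotomy (M.idxOf a) (M.idxOf b) with h | h | h
    · exact fun _ h2 => absurd h h2
    · exact fun _ _ => (List.idxOf_inj (hmem a)).1 h
    · exact fun h1 _ => absurd h h1
  · intro ν hν
    obtain ⟨μ0, hμ0⟩ := hν
    have hiν : M.idxOf ν < M.length := List.idxOf_lt_length_iff.2 (hmem ν)
    have hdropeq : M.drop (M.idxOf ν) = ν :: M.drop (M.idxOf ν + 1) := by
      have := List.drop_eq_getElem_cons hiν
      rwa [List.getElem_idxOf hiν] at this
    have hQd : QList G (M.drop (M.idxOf ν)) := QList_drop G M hQ _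
    rw [hdropeq] at hQd
    have hne : M.drop (M.idxOf ν + 1) ≠ [] := by
      intro hemp
      have := mem_drop_of_indexOf_lt hnd (hmem μ0) hμ0
      rw [hemp] at this
      exact absurd this (List.not_mem_nil (a := μ0))
    obtain ⟨w, hwmem, hwadj, hwdom⟩ := hQd.2 hne
    refine ⟨w, ?_, hwadj, ?_⟩
    · have := indexOf_lt_of_mem_drop hnd hwmem
      omega
    · intro η hη hadj
      refine hwdom η ?_ hadj
      rcases hη with hη | rfl
      · exact List.mem_cons.2 (Or.inr (mem_drop_of_indexOf_lt hnd (hmem η) hη))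
      · exact List.mem_cons.2 (Or.inl rfl)
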